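/- For nonzero vectors u, v in a real inner product space, dist(u, v) := dist(span{u}, span{v}) equals the sine of the angle between u and v, i.e., dist(u,v)² = 1 − ⟨u,v⟩²/(||u||²·||v||²). -/

import Mathlib

open Real

/-- Distance from subspace `X` to subspace `Y`: supremum over unit vectors of `X` of the
distance to `Y`. -/
noncomputable def distSub {H : Type*} [NormedAddCommGroup H] [InnerProductSpace ℝ H]
    (X Y : Submodule ℝ H) : ℝ :=
  ⨆ u : {u : H // u ∈ X ∧ ‖u‖ = 1}, ⨅ v : Y, ‖u.1 - (v : H)‖

lemma inf_dist_line {H : Type*} [NormedAddCommGroup H] [InnerProductSpace ℝ H]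
    (v : H) (hv : v ≠ 0) (x : H) (hx : ‖x‖ = 1) :
    (⨅ y : (Submodule.span ℝ ({v} : Set H)), ‖x - (y : H)‖) =
      Real.sqrt (1 - (inner ℝ x v : ℝ) ^ 2 / ‖v‖ ^ 2) := by
  have hsp : Submodule.span ℝ ({v} : Set H) = (ℝ ∙ v) := rfl
  rw [hsp, ← Submodule.starProjection_minimal x]
  have hproj : ((ℝ ∙ v).starProjection x) =
      ((inner ℝ v x : ℝ) / (‖v‖ ^ 2)) • v := Submodule.starProjection_singleton ℝ x
  rw [hproj]
  have hvn : ‖v‖ ≠ 0 := norm_ne_zero_iff.mpr hv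
  have key : ‖x - ((inner ℝ v x : ℝ) / (‖v‖ ^ 2)) • v‖ ^ 2 =
      1 - (inner ℝ x v : ℝ) ^ 2 / ‖v‖ ^ 2 := by
    rw [norm_sub_sq_real, real_inner_smul_right, norm_smul, real_inner_comm v x, hx]
    simp only [Real.norm_eq_abs, mul_pow, sq_abs]
    field_simp
    ring
  rw [← Real.sqrt_sq (norm_nonneg _), key]

theorem stmt3 {H : Type*} [NormedAddCommGroup H] [InnerProductSpace ℝ H]
    (u v : H) (hu : u ≠ 0) (hv : v ≠ 0) :
    distSub (Submodule.span ℝ {u}) (Submodule.span ℝ {v}) ^ 2 =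
      1 - (inner ℝ u v : ℝ) ^ 2 / (‖u‖ ^ 2 * ‖v‖ ^ 2) := by
  have hun : ‖u‖ ≠ 0 := norm_ne_zero_iff.mpr hu
  have hvn : ‖v‖ ≠ 0 := norm_ne_zero_iff.mpr hv
  set C : ℝ := Real.sqrt (1 - (inner ℝ u v : ℝ) ^ 2 / (‖u‖ ^ 2 * ‖v‖ ^ 2)) with hC
  have hne : Nonempty {x : H // x ∈ Submodule.span ℝ ({u} : Set H) ∧ ‖x‖ = 1} := by
    refine ⟨⟨‖u‖⁻¹ • u, ?_, ?_⟩⟩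
    · exact Submodule.smul_mem _ _ (Submodule.mem_span_singleton_self u)
    · rw [norm_smul, norm_inv, norm_norm, inv_mul_cancel₀ hun]
  have hconst : ∀ x : {x : H // x ∈ Submodule.span ℝ ({u} : Set H) ∧ ‖x‖ = 1},
      (⨅ y : (Submodule.span ℝ ({v} : Set H)), ‖x.1 - (y : H)‖) = C := by
    rintro ⟨x, hxmem, hxn⟩
    rw [inf_dist_line v hv x hxn]
    obtain ⟨c, rfl⟩ := Submodule.mem_span_singleton.mp hxmem
    have hc2 : c ^ 2 = 1 / ‖u‖ ^ 2 := by
      have := hxn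
      rw [norm_smul, Real.norm_eq_abs] at this
      have : (|c| * ‖u‖) ^ 2 = 1 ^ 2 := by rw [this]
      rw [mul_pow, sq_abs, one_pow] at this
      field_simp at this ⊢
      linarith
    rw [hC]
    congr 1
    rw [real_inner_smul_left, mul_pow, hc2]
    field_simp
  have : distSub (Submodule.span ℝ ({u} : Set H)) (Submodule.span ℝ ({v} : Set H)) = C := by
    rw [distSub]
    rw [iSup_congr hconst]
    exact ciSup_const
  rw [this, hC, Real.sq_sqrt]
  have hcs := abs_real_inner_le_norm u v
  have h2 : (inner ℝ u v : ℝ) ^ 2 ≤ ‖u‖ ^ 2 * ‖v‖ ^ 2 := by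
    rw [← mul_pow]
    calc (inner ℝ u v : ℝ) ^ 2 = |(inner ℝ u v : ℝ)| ^ 2 := (sq_abs _).symm
    _ ≤ (‖u‖ * ‖v‖) ^ 2 := pow_le_pow_left₀ (abs_nonneg _) hcs 2
  have hpos : (0:ℝ) < ‖u‖ ^ 2 * ‖v‖ ^ 2 := by positivity
  rw [sub_nonneg, div_le_one hpos]
  exact h2
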